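/- Let G be a group containing a zero-divisor, i.e., elements x ≠ 1, y ≠ 1 with [x, g·y·g⁻¹] = 1 for all g ∈ G. Then for every word w(x₁,x₂) in the free product G * F(x₁,x₂) such that w(a, b) = 1 whenever a = 1 or b = 1, it also holds that w(x, y) = 1. Hence the set {(a,b) : a = 1 or b = 1} is not algebraic over G. -/

import Mathlib

/-- Evaluation of a group word in two variables with constants from `G` (an element of the
free group on `G ⊕ Fin 2`) at a point `(a, b) ∈ G²`: constants map to themselves, the
variable `x` (i.e. `Sum.inr 0`) to `a` and the variable `y` (i.e. `Sum.inr 1`) to `b`. -/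
def evalWord {G : Type*} [Group G] (a b : G) : FreeGroup (G ⊕ Fin 2) →* G :=
  FreeGroup.lift (Sum.elim id (fun n => if n = 0 then a else b))

theorem evalWord_of {G : Type*} [Group G] (a b : G) (i : G ⊕ Fin 2) :
    evalWord a b (FreeGroup.of i) = Sum.elim id (fun n => if n = 0 then a else b) i :=
  FreeGroup.lift_apply_of

/-- If `G` contains a zero-divisor, then every word vanishing on
`{(a,b) : a = 1 ∨ b = 1}` also vanishes at the pair of zero-divisors; hence this set
is not algebraic over `G`. -/
theorem zero_divisors_implies_Mgr_not_algebraic {G : Type*} [Group G]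
    (x y : G) (hx : x ≠ 1) (hy : y ≠ 1)
    (hzd : ∀ g : G, x⁻¹ * (g * y * g⁻¹)⁻¹ * x * (g * y * g⁻¹) = 1) :
    (∀ w : FreeGroup (G ⊕ Fin 2),
      (∀ a b : G, (a = 1 ∨ b = 1) → evalWord a b w = 1) → evalWord x y w = 1) ∧
    ¬∃ W : Set (FreeGroup (G ⊕ Fin 2)),
      {p : G × G | p.1 = 1 ∨ p.2 = 1} =
        {p : G × G | ∀ w ∈ W, evalWord p.1 p.2 w = 1} := by
  set Nx := Subgroup.normalClosure ({x} : Set G) with hNx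
  set Ny := Subgroup.normalClosure ({y} : Set G) with hNy
  -- x commutes with every element of Ny
  have hxNy : ∀ v ∈ Ny, x * v = v * x := by
    have hle : Ny ≤ Subgroup.centralizer {x} := by
      rw [hNy, Subgroup.normalClosure]
      apply Subgroup.closure_le (Subgroup.centralizer {x}) |>.mpr
      intro h hh
      rcases Group.mem_conjugatesOfSet_iff.mp hh with ⟨b, hb, hconj⟩
      rcases Set.mem_singleton_iff.mp hb with rfl
      obtain ⟨c, hc⟩ := isConj_iff.mp hconj
      apply Subgroup.mem_centralizer_iff.mpr
      intro z hz
      rcases Set.mem_singleton_iff.mp hz with rfl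
      have h2 : z⁻¹ * h⁻¹ * z * h = 1 := by rw [← hc]; exact hzd c
      calc z * h = h * (z * (z⁻¹ * h⁻¹ * z * h)) := by group
      _ = h * (z * 1) := by rw [h2]
      _ = h * z := by group
    intro v hv
    exact Subgroup.mem_centralizer_iff.mp (hle hv) x rfl
  -- every element of Nx commutes with every element of Ny
  have hcomm : ∀ u ∈ Nx, ∀ v ∈ Ny, u * v = v * u := by
    have hle : Nx ≤ Subgroup.centralizer (Ny : Set G) := by
      rw [hNx, Subgroup.normalClosure]
      apply Subgroup.closure_le _ |>.mpr
      intro h hh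
      rcases Group.mem_conjugatesOfSet_iff.mp hh with ⟨b, hb, hconj⟩
      rcases Set.mem_singleton_iff.mp hb with rfl
      obtain ⟨c, hc⟩ := isConj_iff.mp hconj
      apply Subgroup.mem_centralizer_iff.mpr
      intro v hv
      have hv' : c⁻¹ * v * c ∈ Ny := by
        have := Subgroup.Normal.conj_mem (Subgroup.normalClosure_normal) v hv c⁻¹
        simpa using this
      have hcm := hxNy _ hv'
      rw [← hc]
      calc v * (c * b * c⁻¹) = c * ((c⁻¹ * v * c) * b) * c⁻¹ := by group
        _ = c * (b * (c⁻¹ * v * c)) * c⁻¹ := by rw [← hcm]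
        _ = (c * b * c⁻¹) * v := by group
    intro u hu v hv
    exact (Subgroup.mem_centralizer_iff.mp (hle hu) v hv).symm
  have key : ∀ w : FreeGroup (G ⊕ Fin 2),
      evalWord x y w = evalWord x 1 w * (evalWord (1:G) 1 w)⁻¹ * evalWord 1 y w ∧
      evalWord x 1 w * (evalWord (1:G) 1 w)⁻¹ ∈ Nx ∧
      (evalWord (1:G) 1 w)⁻¹ * evalWord 1 y w ∈ Ny := by
    intro w
    induction w using FreeGroup.induction_on with
    | C1 => exact ⟨by simp, by simpa using one_mem Nx, by simpa using one_mem Ny⟩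
    | of i =>
      rcases i with g | n
      · refine ⟨?_, ?_, ?_⟩ <;>
          simp [show (pure (Sum.inl g) : FreeGroup (G ⊕ Fin 2)) = FreeGroup.of (Sum.inl g)
            from rfl, evalWord_of]
        all_goals exact one_mem _
      · fin_cases n <;>
          [(refine ⟨?_, ?_, ?_⟩ <;>
            simp [show (pure (Sum.inr (0:Fin 2)) : FreeGroup (G ⊕ Fin 2)) =
              FreeGroup.of (Sum.inr 0) from rfl, evalWord_of]);
           (refine ⟨?_, ?_, ?_⟩ <;>
            simp [show (pure (Sum.inr (1:Fin 2)) : FreeGroup (G ⊕ Fin 2)) =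
              FreeGroup.of (Sum.inr 1) from rfl, evalWord_of])] <;>
        first
          | exact one_mem _
          | exact Subgroup.subset_normalClosure rfl
    | inv_of i _ =>
      rcases i with g | n
      · refine ⟨?_, ?_, ?_⟩ <;>
          simp [show (pure (Sum.inl g) : FreeGroup (G ⊕ Fin 2)) = FreeGroup.of (Sum.inl g)
            from rfl, evalWord_of]
        all_goals exact one_mem _
      · fin_cases n <;>
          [(refine ⟨?_, ?_, ?_⟩ <;>
            simp [show (pure (Sum.inr (0:Fin 2)) : FreeGroup (G ⊕ Fin 2)) =
              FreeGroup.of (Sum.inr 0) from rfl, evalWord_of]);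
           (refine ⟨?_, ?_, ?_⟩ <;>
            simp [show (pure (Sum.inr (1:Fin 2)) : FreeGroup (G ⊕ Fin 2)) =
              FreeGroup.of (Sum.inr 1) from rfl, evalWord_of])] <;>
        first
          | exact one_mem _
          | exact Subgroup.subset_normalClosure rfl
    | mul w₁ w₂ ih₁ ih₂ =>
      obtain ⟨e₁, m₁x, m₁y⟩ := ih₁
      obtain ⟨e₂, m₂x, m₂y⟩ := ih₂
      simp only [map_mul]
      set A₁ := evalWord x (1:G) w₁; set B₁ := evalWord (1:G) (1:G) w₁
      set C₁ := evalWord (1:G) y w₁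
      set A₂ := evalWord x (1:G) w₂; set B₂ := evalWord (1:G) (1:G) w₂
      set C₂ := evalWord (1:G) y w₂
      have huv : (B₁⁻¹ * C₁) * (A₂ * B₂⁻¹) = (A₂ * B₂⁻¹) * (B₁⁻¹ * C₁) :=
        (hcomm _ m₂x _ m₁y).symm
      refine ⟨?_, ?_, ?_⟩
      · rw [e₁, e₂]
        calc A₁ * B₁⁻¹ * C₁ * (A₂ * B₂⁻¹ * C₂)
            = A₁ * ((B₁⁻¹ * C₁) * (A₂ * B₂⁻¹)) * C₂ := by group
          _ = A₁ * ((A₂ * B₂⁻¹) * (B₁⁻¹ * C₁)) * C₂ := by rw [huv]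
          _ = A₁ * A₂ * (B₁ * B₂)⁻¹ * (C₁ * C₂) := by group
      · have h1 : A₁ * (A₂ * B₂⁻¹) * A₁⁻¹ ∈ Nx :=
          Subgroup.Normal.conj_mem (Subgroup.normalClosure_normal) _ m₂x A₁
        have h2 : A₁ * A₂ * (B₁ * B₂)⁻¹ = (A₁ * (A₂ * B₂⁻¹) * A₁⁻¹) * (A₁ * B₁⁻¹) := by group
        rw [h2]
        exact Subgroup.mul_mem _ h1 m₁x
      · have h1 : B₂⁻¹ * (B₁⁻¹ * C₁) * (B₂⁻¹)⁻¹ ∈ Ny :=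
          Subgroup.Normal.conj_mem (Subgroup.normalClosure_normal) _ m₁y B₂⁻¹
        have h2 : (B₁ * B₂)⁻¹ * (C₁ * C₂) =
            (B₂⁻¹ * (B₁⁻¹ * C₁) * (B₂⁻¹)⁻¹) * (B₂⁻¹ * C₂) := by group
        rw [h2]
        exact Subgroup.mul_mem _ h1 m₂y
  have main : ∀ w : FreeGroup (G ⊕ Fin 2),
      (∀ a b : G, (a = 1 ∨ b = 1) → evalWord a b w = 1) → evalWord x y w = 1 := by
    intro w hw
    obtain ⟨e, -, -⟩ := key w
    rw [e, hw x 1 (Or.inr rfl), hw 1 1 (Or.inl rfl), hw 1 y (Or.inl rfl)]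
    group
  refine ⟨main, ?_⟩
  rintro ⟨W, hW⟩
  have hmem : (x, y) ∈ {p : G × G | ∀ w ∈ W, evalWord p.1 p.2 w = 1} := by
    intro w hw
    refine main w ?_
    intro a b hab
    have h3 : (a, b) ∈ {p : G × G | p.1 = 1 ∨ p.2 = 1} := hab
    rw [hW] at h3
    exact h3 w hw
  rw [← hW] at hmem
  rcases hmem with h | h
  · exact hx h
  · exact hy h
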